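/- The Lyndon factorization boundaries of a string T with suffix array inverse ISA are exactly the positions i ∈ [1, n] such that ISA[i] < ISA[j] for all j < i; i.e., position i starts a Lyndon factor of T if and only if the suffix T[i..n] is lexicographically smaller than every suffix T[j..n] with j < i. -/

import Mathlib

/-- A Lyndon word: a nonempty string strictly lexicographically smaller than
all of its proper nonempty suffixes. -/
def IsLyndon {α : Type*} [LinearOrder α] (w : List α) : Prop :=
  w ≠ [] ∧ ∀ s : List α, s ≠ [] → s ≠ w → s <:+ w → w < s

namespace Stmt14Aux

open List

variable {α : Type*} [LinearOrder α]

theorem lt_lex {l l' : List α} : l < l' ↔ List.Lex (· < ·) l l' := Iff.rfl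

theorem nil_lt {l : List α} (h : l ≠ []) : ([] : List α) < l := by
  cases l with
  | nil => exact absurd rfl h
  | cons a t => exact List.nil_lt_cons a t

theorem append_lt_append_left {s t₁ t₂ : List α} (h : t₁ < t₂) : s ++ t₁ < s ++ t₂ :=
  lt_lex.2 (List.Lex.append_left _ (lt_lex.1 h) s)

/-- If `x < y` and `x` is not a prefix of `y`, then the comparison is decided by a
strict character difference, so arbitrary extensions compare the same way. -/
theorem keyK : ∀ {x y : List α}, List.Lex (· < ·) x y → ¬ x <+: y →
    ∀ u v : List α, x ++ u < y ++ v := by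
  intro x y h
  induction h with
  | nil => intro hnp; exact absurd List.nil_prefix hnp
  | @cons a l₁ l₂ h ih =>
    intro hnp u v
    have hnp' : ¬ l₁ <+: l₂ := fun hp => hnp (List.cons_prefix_cons.2 ⟨rfl, hp⟩)
    exact lt_lex.2 (List.Lex.cons (lt_lex.1 (ih hnp' u v)))
  | @rel a₁ l₁ a₂ l₂ h =>
    intro _ u v
    exact lt_lex.2 (List.Lex.rel h)

theorem keyK' {x y : List α} (h : x < y) (hnp : ¬ x <+: y) (u v : List α) :
    x ++ u < y ++ v := keyK (lt_lex.1 h) hnp u v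

/-- A proper prefix is lexicographically smaller. -/
theorem lt_of_proper_prefix {x y : List α} (hp : x <+: y) (hne : x ≠ y) : x < y := by
  obtain ⟨t, rfl⟩ := hp
  have ht : t ≠ [] := by rintro rfl; simp at hne
  induction x with
  | nil => simpa using nil_lt ht
  | cons a x ih =>
    have hx : x ++ t ≠ x := by
      intro h
      exact ht (by simpa using congrArg (List.drop x.length) h)
    have := ih (by simpa using hx)
    exact lt_lex.2 (List.Lex.cons (lt_lex.1 this))

/-- A Lyndon word extended by anything is smaller than a proper nonempty suffix
extended by anything. -/
theorem lyndon_append_lt {w s : List α} (hw : IsLyndon w) (hs : s ≠ []) (hsw : s ≠ w)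
    (hsuf : s <:+ w) (u v : List α) : w ++ u < s ++ v := by
  have hlt : w < s := hw.2 s hs hsw hsuf
  have hnp : ¬ w <+: s := by
    intro hp
    exact hsw (hsuf.eq_of_length (le_antisymm hsuf.length_le hp.length_le))
  exact keyK' hlt hnp u v

/-- Four-way comparison of two lists. -/
theorem compare4 (x y : List α) :
    x = y ∨ (x <+: y ∧ x ≠ y) ∨ (y <+: x ∧ y ≠ x) ∨
      (∀ u v, x ++ u < y ++ v) ∨ (∀ u v, y ++ u < x ++ v) := by
  rcases eq_or_ne x y with h | hne
  · exact Or.inl h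
  rcases lt_trichotomy x y with hlt | heq | hgt
  · by_cases hp : x <+: y
    · exact Or.inr (Or.inl ⟨hp, hne⟩)
    · exact Or.inr (Or.inr (Or.inr (Or.inl fun u v => keyK' hlt hp u v)))
  · exact Or.inl heq
  · by_cases hp : y <+: x
    · exact Or.inr (Or.inr (Or.inl ⟨hp, hne.symm⟩))
    · exact Or.inr (Or.inr (Or.inr (Or.inr fun u v => keyK' hgt hp u v)))

/-- Workhorse: if `w` is Lyndon, `w'` is nonempty with `w' ≤ w`, and
`v₂ < w' ++ v₂`, then `w' ++ v₂ < s ++ (w' ++ v₂)` for every nonempty suffix `s` of `w`. -/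
theorem keyC (w w' v₂ : List α) (hw : IsLyndon w) (hw' : w' ≠ []) (hle : w' ≤ w)
    (hv : v₂ < w' ++ v₂) (s : List α) (hs : s ≠ []) (hsuf : s <:+ w) :
    w' ++ v₂ < s ++ (w' ++ v₂) := by
  rcases compare4 w' s with heq | ⟨hp, hne⟩ | ⟨hp, hne⟩ | h | h
  · rw [← heq]
    exact append_lt_append_left hv
  · obtain ⟨u, hu⟩ := hp
    have hu0 : u ≠ [] := by rintro rfl; exact hne (by simpa using hu)
    have husuf : u <:+ w := (show u <:+ s from hu ▸ List.suffix_append w' u).trans hsuf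
    have hrec := keyC w w' v₂ hw hw' hle hv u hu0 husuf
    rw [← hu, List.append_assoc]
    exact append_lt_append_left (hv.trans hrec)
  · have hslt : s < w' := lt_of_proper_prefix hp hne
    exfalso
    rcases eq_or_ne s w with rfl | hsw
    · exact absurd (lt_of_lt_of_le hslt hle) (lt_irrefl s)
    · exact absurd ((hw.2 s hs hsw hsuf).trans (hslt.trans_le hle)) (lt_irrefl w)
  · exact h v₂ (w' ++ v₂)
  · exfalso
    have hslt : s < w' := by simpa using h [] []
    rcases eq_or_ne s w with rfl | hsw
    · exact absurd (hslt.trans_le hle) (lt_irrefl s)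
    · exact absurd ((hw.2 s hs hsw hsuf).trans (hslt.trans_le hle)) (lt_irrefl w)
termination_by s.length
decreasing_by
  have h1 : 0 < w'.length := List.length_pos_iff.2 hw'
  have h2 : s.length = w'.length + u.length := by rw [← hu, List.length_append]
  omega

/-- The suffix of the flattening starting after the first factor is smaller than the
whole flattening, for a nonincreasing list of Lyndon words. -/
theorem flatten_lt : ∀ (w : List α) (rest : List (List α)),
    (∀ x ∈ w :: rest, IsLyndon x) → ((w :: rest).Chain' fun a b => b ≤ a) →
    rest.flatten < w ++ rest.flatten := by
  intro w rest
  induction rest generalizing w with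
  | nil =>
    intro hL _
    simpa using nil_lt (hL w (List.mem_cons_self)).1
  | cons w' gs' ih =>
    intro hL hch
    have hw0 : IsLyndon w := hL w (List.mem_cons_self)
    have hL' : ∀ x ∈ w' :: gs', IsLyndon x := fun x hx => hL x (List.mem_cons_of_mem _ hx)
    have hle : w' ≤ w := (List.isChain_cons_cons.1 hch).1
    have hv := ih w' hL' hch.tail
    have hw' : IsLyndon w' := hL' w' (List.mem_cons_self)
    have := keyC w w' gs'.flatten hw0 hw'.1 hle hv w hw0.1 (List.suffix_refl w)
    simpa using this

omit [LinearOrder α] in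
theorem b_mono (fs : List (List α)) : Monotone fun k => ((fs.take k).map List.length).sum := by
  apply monotone_nat_of_le_succ
  intro n
  rw [List.take_succ]
  simp

omit [LinearOrder α] in
theorem b_succ (fs : List (List α)) {t : ℕ} (ht : t < fs.length) :
    ((fs.take (t + 1)).map List.length).sum
      = ((fs.take t).map List.length).sum + fs[t].length := by
  rw [List.map_take, List.map_take, List.sum_take_succ (fs.map List.length) t (by simpa using ht),
    List.getElem_map]

omit [LinearOrder α] in
theorem drop_flatten_b (fs : List (List α)) (k : ℕ) :
    fs.flatten.drop (((fs.take k).map List.length).sum) = (fs.drop k).flatten := by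
  have h : fs.flatten = (fs.take k).flatten ++ (fs.drop k).flatten := by
    rw [← List.flatten_append, List.take_append_drop]
  rw [h, ← List.length_flatten, List.drop_left]

theorem drop_flatten_strict (fs : List (List α)) (hL : ∀ w ∈ fs, IsLyndon w)
    (hch : fs.Chain' fun a b => b ≤ a) {t : ℕ} (ht : t < fs.length) :
    (fs.drop (t + 1)).flatten < (fs.drop t).flatten := by
  have hdt : fs.drop t = fs[t] :: fs.drop (t + 1) := List.drop_eq_getElem_cons ht
  have := flatten_lt fs[t] (fs.drop (t + 1))
    (by rw [← hdt]; exact fun w hw => hL w (List.mem_of_mem_drop hw))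
    (by rw [← hdt]; exact hch.drop t)
  rw [hdt, List.flatten_cons]
  exact this

theorem drop_flatten_lt_of_lt (fs : List (List α)) (hL : ∀ w ∈ fs, IsLyndon w)
    (hch : fs.Chain' fun a b => b ≤ a) :
    ∀ {t k : ℕ}, t < k → k ≤ fs.length → (fs.drop k).flatten < (fs.drop t).flatten := by
  intro t k
  induction k with
  | zero => omega
  | succ k ih =>
    intro htk hk
    have hk' : k < fs.length := by omega
    have hstep := drop_flatten_strict fs hL hch hk'
    rcases Nat.lt_or_ge t k with h | h
    · exact hstep.trans (ih h (le_of_lt hk'))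
    · have : t = k := by omega
      subst this
      exact hstep

end Stmt14Aux

open Stmt14Aux List in
/-- The Lyndon factorization boundaries of `T` are exactly the positions `i`
whose `ISA` value is smaller than that of every earlier position: if
`T = w₁ w₂ ⋯ w_f` is the Lyndon factorization (each `wᵢ` Lyndon and
`w₁ ≥ w₂ ≥ ⋯ ≥ w_f`), `T` ends in a unique smallest sentinel, and `ISA` ranks
the suffixes of `T` lexicographically, then a position `i` starts a Lyndon
factor of `T` iff `ISA i < ISA j` for all `j < i`, i.e. iff the suffix at `i`
is lexicographically smaller than every earlier suffix. -/
theorem stmt14 {α : Type*} [LinearOrder α] (T : List α) (hT : T ≠ [])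
    (hsent : ∀ j : Fin T.length, (j : ℕ) + 1 < T.length →
      T.getLast hT < T.get j)
    (fs : List (List α)) (hjoin : fs.flatten = T)
    (hLyndon : ∀ w ∈ fs, IsLyndon w)
    (hsorted : fs.Chain' fun a b => b ≤ a)
    (ISA : ℕ → ℕ)
    (hord : ∀ i j, i < T.length → j < T.length →
      (ISA i < ISA j ↔ T.drop i < T.drop j)) :
    ∀ i, i < T.length →
      ((∃ k, k < fs.length ∧ i = ((fs.take k).map List.length).sum) ↔
        ∀ j, j < i → ISA i < ISA j) := by
  subst hjoin
  have hblen : ((fs.take fs.length).map List.length).sum = fs.flatten.length := by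
    rw [List.take_length, List.length_flatten]
  -- locate a position inside its factor
  have loc : ∀ j, j < fs.flatten.length → ∃ t, t < fs.length ∧
      ((fs.take t).map List.length).sum ≤ j ∧
      j < ((fs.take (t + 1)).map List.length).sum := by
    intro j hj
    classical
    set P : ℕ → Prop := fun t => ((fs.take t).map List.length).sum ≤ j with hP
    have h0 : P 0 := by simp [hP]
    have hspec : P (Nat.findGreatest P fs.length) :=
      Nat.findGreatest_spec (Nat.zero_le _) h0
    set t := Nat.findGreatest P fs.length with htdef
    have htle : t ≤ fs.length := Nat.findGreatest_le _
    have htlt : t < fs.length := by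
      rcases eq_or_lt_of_le htle with heq | h
      · exfalso
        have hspec' : ((fs.take fs.length).map List.length).sum ≤ j := by
          rw [heq] at hspec; exact hspec
        omega
      · exact h
    refine ⟨t, htlt, hspec, ?_⟩
    by_contra hcon
    push_neg at hcon
    exact Nat.findGreatest_is_greatest (Nat.lt_succ_self t) (by omega) hcon
  -- decompose the suffix at a position inside factor t
  have decomp : ∀ (j t : ℕ) (ht : t < fs.length),
      ((fs.take t).map List.length).sum ≤ j →
      j < ((fs.take (t + 1)).map List.length).sum →
      fs.flatten.drop j
          = fs[t].drop (j - ((fs.take t).map List.length).sum) ++ (fs.drop (t + 1)).flatten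
        ∧ j - ((fs.take t).map List.length).sum < fs[t].length := by
    intro j t ht h1 h2
    have hbs := b_succ fs ht
    have hdt : fs.drop t = fs[t] :: fs.drop (t + 1) := List.drop_eq_getElem_cons ht
    have hstep : fs.flatten.drop j
        = (fs.flatten.drop (((fs.take t).map List.length).sum)).drop
            (j - ((fs.take t).map List.length).sum) := by
      rw [List.drop_drop]
      congr 1
      omega
    rw [drop_flatten_b fs t, hdt, List.flatten_cons] at hstep
    have hjb : j - ((fs.take t).map List.length).sum ≤ fs[t].length := by omega
    rw [List.drop_append_of_le_length hjb] at hstep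
    exact ⟨hstep, by omega⟩
  -- the suffix at an interior position is larger than the factor-boundary suffix
  have interior : ∀ (j t : ℕ) (ht : t < fs.length),
      ((fs.take t).map List.length).sum ≤ j →
      j < ((fs.take (t + 1)).map List.length).sum →
      j ≠ ((fs.take t).map List.length).sum →
      (fs.drop t).flatten < fs.flatten.drop j := by
    intro j t ht h1 h2 hne
    obtain ⟨hdec, hlt⟩ := decomp j t ht h1 h2
    have hLt : IsLyndon fs[t] := hLyndon fs[t] (List.getElem_mem ht)
    have hwpos : 0 < fs[t].length := List.length_pos_iff.2 hLt.1
    have hsne : fs[t].drop (j - ((fs.take t).map List.length).sum) ≠ [] := by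
      apply List.ne_nil_of_length_pos
      simp only [List.length_drop]
      omega
    have hsnw : fs[t].drop (j - ((fs.take t).map List.length).sum) ≠ fs[t] := by
      intro h
      have := congrArg List.length h
      simp only [List.length_drop] at this
      omega
    have hE := lyndon_append_lt hLt hsne hsnw (List.drop_suffix _ _)
      (fs.drop (t + 1)).flatten (fs.drop (t + 1)).flatten
    rw [hdec, List.drop_eq_getElem_cons ht, List.flatten_cons]
    exact hE
  intro i hi
  constructor
  · rintro ⟨k, hk, rfl⟩ j hj
    have hjn : j < fs.flatten.length := lt_trans hj hi
    rw [hord _ _ hi hjn]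
    obtain ⟨t, ht, h1, h2⟩ := loc j hjn
    have htk : t < k := by
      by_contra hcon
      push_neg at hcon
      have hmono : ((fs.take k).map List.length).sum ≤ ((fs.take t).map List.length).sum :=
        b_mono fs hcon
      omega
    have hchain := drop_flatten_lt_of_lt fs hLyndon hsorted htk (le_of_lt hk)
    rw [drop_flatten_b fs k]
    rcases eq_or_ne j (((fs.take t).map List.length).sum) with rfl | hne
    · rw [drop_flatten_b fs t]
      exact hchain
    · exact hchain.trans (interior j t ht h1 h2 hne)
  · intro h
    by_contra hnb
    push_neg at hnb
    obtain ⟨t, ht, h1, h2⟩ := loc i hi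
    have hne : i ≠ ((fs.take t).map List.length).sum := hnb t ht
    have hbti : ((fs.take t).map List.length).sum < i := lt_of_le_of_ne h1 (Ne.symm hne)
    have hbtn : ((fs.take t).map List.length).sum < fs.flatten.length := lt_trans hbti hi
    have hj := h _ hbti
    rw [hord i _ hi hbtn] at hj
    have hgt : fs.flatten.drop (((fs.take t).map List.length).sum) < fs.flatten.drop i := by
      rw [drop_flatten_b fs t]
      exact interior i t ht h1 h2 hne
    exact absurd hj (lt_asymm hgt)
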